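/- Let σ ≥ 0 and m ∈ ℕ, and set m_σ = m + 1 + (1/2)·⌈σ⌉(⌈σ⌉+1). Then there exists C > 0 such that ‖φ‖_{S^m} ≤ C·‖φ‖_{S_{w,σ}^{m_σ}} for every Schwartz function φ : ℝ → ℝ. -/

import Mathlib

open MeasureTheory Real

noncomputable section

/-- The even part of a function. -/
def evenPart (φ : ℝ → ℝ) : ℝ → ℝ := fun x => (φ x + φ (-x)) / 2

/-- The odd part of a function. -/
def oddPart (φ : ℝ → ℝ) : ℝ → ℝ := fun x => (φ x - φ (-x)) / 2

/-- For an odd smooth function ψ, `invX ψ` is the smooth function η with ψ(x) = x·η(x). -/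
def invX (ψ : ℝ → ℝ) : ℝ → ℝ := fun x => if x = 0 then deriv ψ 0 else ψ x / x

/-- The Dunkl operator `T_σ φ = φ' + 2σ·x⁻¹(φ_odd)`. -/
def dunklT (σ : ℝ) (φ : ℝ → ℝ) : ℝ → ℝ := fun x => deriv φ x + 2 * σ * invX (oddPart φ) x

/-- The Dunkl harmonic oscillator `L_σ φ = -T_σ(T_σ φ) + s²x²φ`. -/
def dunklL (σ s : ℝ) (φ : ℝ → ℝ) : ℝ → ℝ :=
  fun x => -dunklT σ (dunklT σ φ) x + s ^ 2 * x ^ 2 * φ x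

/-- Index pairs (i, j) with i + j ≤ m. -/
def idx (m : ℕ) : Finset (ℕ × ℕ) :=
  (Finset.range (m + 1) ×ˢ Finset.range (m + 1)).filter fun p => p.1 + p.2 ≤ m

def idxE (m : ℕ) : Finset (ℕ × ℕ) := (idx m).filter fun p => Even (p.1 + p.2)

def idxO (m : ℕ) : Finset (ℕ × ℕ) := (idx m).filter fun p => ¬ Even (p.1 + p.2)

/-- The Schwartz norm ‖φ‖_{S^m}. -/
def SNorm (m : ℕ) (φ : ℝ → ℝ) : ℝ :=
  ∑ p ∈ idx m, ⨆ x : ℝ, |x ^ p.1 * iteratedDeriv p.2 φ x|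

/-- Generic norm for σ ≥ 0: Σ_{i+j≤m} sup_x |x|^σ |x^i g_j(x)|. -/
def gNormNonneg (σ : ℝ) (m : ℕ) (g : ℕ → ℝ → ℝ) : ℝ :=
  ∑ p ∈ idx m, ⨆ x : ℝ, |x| ^ σ * |x ^ p.1 * g p.2 x|

/-- Generic norm for σ < 0 on even functions. -/
def gNormNegE (σ : ℝ) (m : ℕ) (g : ℕ → ℝ → ℝ) : ℝ :=
  (∑ p ∈ idxE m, ((⨆ x : {x : ℝ // 0 < |x| ∧ |x| ≤ 1}, |(x : ℝ) ^ p.1 * g p.2 x|) +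
      ⨆ x : {x : ℝ // 1 ≤ |x|}, |(x : ℝ)| ^ σ * |(x : ℝ) ^ p.1 * g p.2 x|)) +
  ∑ p ∈ idxO m, ⨆ x : {x : ℝ // x ≠ 0}, |(x : ℝ)| ^ σ * |(x : ℝ) ^ p.1 * g p.2 x|

/-- Generic norm for σ < 0 on odd functions. -/
def gNormNegO (σ : ℝ) (m : ℕ) (g : ℕ → ℝ → ℝ) : ℝ :=
  (∑ p ∈ idxO m, ((⨆ x : {x : ℝ // 0 < |x| ∧ |x| ≤ 1}, |(x : ℝ) ^ p.1 * g p.2 x|) +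
      ⨆ x : {x : ℝ // 1 ≤ |x|}, |(x : ℝ)| ^ σ * |(x : ℝ) ^ p.1 * g p.2 x|)) +
  ∑ p ∈ idxE m, ⨆ x : {x : ℝ // x ≠ 0}, |(x : ℝ)| ^ σ * |(x : ℝ) ^ p.1 * g p.2 x|

/-- The family of iterated derivatives of φ. -/
def derivFam (φ : ℝ → ℝ) : ℕ → ℝ → ℝ := fun j => iteratedDeriv j φ

/-- The family of iterates of the Dunkl operator applied to φ. -/
def dunklFam (σ : ℝ) (φ : ℝ → ℝ) : ℕ → ℝ → ℝ := fun j => (dunklT σ)^[j] φ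

/-- Weakly perturbed Schwartz norm ‖φ‖_{S_{w,σ}^m} for even φ. -/
def SwNormEven (σ : ℝ) (m : ℕ) (φ : ℝ → ℝ) : ℝ :=
  if 0 ≤ σ then gNormNonneg σ m (derivFam φ) else gNormNegE σ m (derivFam φ)

/-- Weakly perturbed Schwartz norm ‖φ‖_{S_{w,σ}^m} for odd φ. -/
def SwNormOdd (σ : ℝ) (m : ℕ) (φ : ℝ → ℝ) : ℝ :=
  if 0 ≤ σ then gNormNonneg σ m (derivFam φ) else gNormNegO σ m (derivFam φ)

/-- Perturbed Schwartz norm ‖φ‖_{S_σ^m} for even φ. -/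
def SpNormEven (σ : ℝ) (m : ℕ) (φ : ℝ → ℝ) : ℝ :=
  if 0 ≤ σ then gNormNonneg σ m (dunklFam σ φ) else gNormNegE σ m (dunklFam σ φ)

/-- Perturbed Schwartz norm ‖φ‖_{S_σ^m} for odd φ. -/
def SpNormOdd (σ : ℝ) (m : ℕ) (φ : ℝ → ℝ) : ℝ :=
  if 0 ≤ σ then gNormNonneg σ m (dunklFam σ φ) else gNormNegO σ m (dunklFam σ φ)

/-- Perturbed Schwartz norm for a general φ: the sum of the norms of its even and odd parts. -/
def SpNorm (σ : ℝ) (m : ℕ) (φ : ℝ → ℝ) : ℝ :=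
  SpNormEven σ m (evenPart φ) + SpNormOdd σ m (oddPart φ)

/-- The perturbed Sobolev norm ‖φ‖_{W_σ^m} = ⟨(1+L_σ)^m φ, φ⟩_σ^{1/2}. -/
def WNorm (σ s : ℝ) (m : ℕ) (φ : ℝ → ℝ) : ℝ :=
  Real.sqrt (∫ x : ℝ, ((fun ψ => ψ + dunklL σ s ψ)^[m] φ) x * φ x * |x| ^ (2 * σ))

/-- The Dunkl creation operator `B' φ = sxφ - T_σ φ`. -/
def Bop' (σ s : ℝ) (φ : ℝ → ℝ) : ℝ → ℝ := fun x => s * x * φ x - dunklT σ φ x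

/-- The generalized Hermite functions φ_k. -/
def hermiteFn (σ s : ℝ) : ℕ → ℝ → ℝ
  | 0 => fun x => s ^ ((2 * σ + 1) / 4) * (Real.Gamma (σ + 1 / 2)) ^ (-(1 / 2) : ℝ) *
      Real.exp (-s * x ^ 2 / 2)
  | (k + 1) =>
      if Even (k + 1) then
        fun x => (2 * ((k : ℝ) + 1) * s) ^ (-(1 / 2) : ℝ) * Bop' σ s (hermiteFn σ s k) x
      else
        fun x => (2 * ((k : ℝ) + 1 + 2 * σ) * s) ^ (-(1 / 2) : ℝ) * Bop' σ s (hermiteFn σ s k) x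

/-- The perturbed factorial m!_σ. -/
def pfact (σ : ℝ) : ℕ → ℝ
  | 0 => 1
  | (m + 1) =>
      if Even (m + 1) then pfact σ m * ((m : ℝ) + 1)
      else pfact σ m * ((m : ℝ) + 1 + 2 * σ)

/-- The generalized Hermite polynomials p_k = φ_k · e^{sx²/2}. -/
def genHermitePoly (σ s : ℝ) (k : ℕ) : ℝ → ℝ :=
  fun x => hermiteFn σ s k x * Real.exp (s * x ^ 2 / 2)

end
section Helpers

open Set

lemma itd_comp (f : ℝ → ℝ) (j : ℕ) :
    ∀ l, iteratedDeriv l (iteratedDeriv j f) = iteratedDeriv (j + l) f := by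
  intro l
  induction l with
  | zero => simp
  | succ l ih =>
    rw [iteratedDeriv_succ, ih, ← iteratedDeriv_succ, Nat.add_assoc]

lemma itd_smooth {f : ℝ → ℝ} (hf : ContDiff ℝ (⊤ : ℕ∞) f) (j : ℕ) :
    ContDiff ℝ (⊤ : ℕ∞) (iteratedDeriv j f) := by
  rw [iteratedDeriv_eq_iterate]
  exact hf.iterate_deriv j

lemma itdW_eq {f : ℝ → ℝ} (hf : ContDiff ℝ (⊤ : ℕ∞) f) {s : Set ℝ}
    (hs : UniqueDiffOn ℝ s) {x : ℝ} (hx : x ∈ s) (n : ℕ) :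
    iteratedDerivWithin n f s x = iteratedDeriv n f x := by
  have h : HasFTaylorSeriesUpTo (⊤ : ℕ∞) f (ftaylorSeries ℝ f) :=
    contDiff_iff_ftaylorSeries.mp hf
  have h2 := (h.hasFTaylorSeriesUpToOn s).eq_iteratedFDerivWithin_of_uniqueDiffOn
    (m := n) (by exact_mod_cast le_top) hs hx
  rw [iteratedDerivWithin_eq_iteratedFDerivWithin, iteratedDeriv_eq_iteratedFDeriv, ← h2]
  rfl

lemma keyNeg {g : ℝ → ℝ} (hg : ContDiff ℝ (⊤ : ℕ∞) g) {σ : ℝ} (hσ : 0 ≤ σ) {K : ℕ}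
    (hK : σ ≤ K) {A : ℝ}
    (hA : ∀ l ≤ K + 1, ∀ t : ℝ, |t| ^ σ * |iteratedDeriv l g t| ≤ A)
    {x : ℝ} (hx1 : -1 ≤ x) (hx0 : x < 0) : |g x| ≤ (K + 2) * A := by
  have hb : ∀ l ≤ K + 1, |iteratedDeriv l g (-1)| ≤ A := by
    intro l hl
    have := hA l hl (-1)
    simpa using this
  have hA0 : 0 ≤ A := le_trans (abs_nonneg _) (hb 0 (by omega))
  rcases eq_or_lt_of_le hx1 with rfl | hlt
  · calc |g (-1)| ≤ A := by simpa using hb 0 (by omega)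
      _ ≤ (K + 2) * A := by nlinarith
  · have hs : UniqueDiffOn ℝ (Icc (-1 : ℝ) x) := uniqueDiffOn_Icc hlt
    have hdiff : Differentiable ℝ (iteratedDeriv K g) :=
      hg.differentiable_iteratedDeriv K (by exact_mod_cast (WithTop.coe_lt_top K : (K : ℕ∞) < ⊤))
    have hu : uIcc (-1 : ℝ) x = Icc (-1) x := uIcc_of_le hlt.le
    have hu' : uIoo (-1 : ℝ) x = Ioo (-1) x := uIoo_of_lt hlt
    obtain ⟨x', hx', heq⟩ := taylor_mean_remainder_cauchy (f := g) (x₀ := -1) (x := x)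
      (n := K) hlt.ne (by rw [hu]; exact (hg.of_le (by exact_mod_cast le_top)).contDiffOn)
      (by rw [hu, hu']; exact ((hdiff.differentiableOn).congr fun y hy =>
        itdW_eq hg hs (Ioo_subset_Icc_self hy) K))
    rw [hu'] at hx'
    rw [hu] at heq
    have hx'0 : x' < 0 := hx'.2.trans hx0
    set r : ℝ := |x'| with hr
    have hr0 : 0 < r := abs_pos.mpr (ne_of_lt hx'0)
    have hr1 : r ≤ 1 := abs_le.mpr ⟨hx'.1.le, by linarith [hx'.2]⟩
    -- bound the Taylor polynomial
    have hT : |taylorWithinEval g K (Icc (-1 : ℝ) x) (-1) x| ≤ (K + 1) * A := by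
      rw [taylor_within_apply]
      refine le_trans (Finset.abs_sum_le_sum_abs _ _) ?_
      have hbound : ∀ l ∈ Finset.range (K + 1),
          |((l.factorial : ℝ)⁻¹ * (x - -1) ^ l) • iteratedDerivWithin l g (Icc (-1 : ℝ) x) (-1)| ≤ A := by
        intro l hl
        rw [Finset.mem_range] at hl
        rw [smul_eq_mul, abs_mul,
          itdW_eq hg hs (Set.left_mem_Icc.mpr hlt.le) l]
        have h1 : |(l.factorial : ℝ)⁻¹| ≤ 1 := by
          rw [abs_of_nonneg (by positivity)]
          rw [inv_le_one_iff₀]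
          right
          exact_mod_cast Nat.one_le_iff_ne_zero.mpr l.factorial_ne_zero
        have h2 : |(x - -1) ^ l| ≤ 1 := by
          rw [abs_pow]
          apply pow_le_one₀ (abs_nonneg _)
          rw [abs_le]; constructor <;> linarith
        have h3 := hb l (by omega)
        have h4 : |(l.factorial : ℝ)⁻¹ * (x - -1) ^ l| ≤ 1 := by
          rw [abs_mul]
          calc |(l.factorial : ℝ)⁻¹| * |(x - -1) ^ l| ≤ 1 * 1 := by
                exact mul_le_mul h1 h2 (abs_nonneg _) zero_le_one
            _ = 1 := one_mul 1
        rw [abs_mul]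
        calc |(l.factorial : ℝ)⁻¹| * |(x - -1) ^ l| * |iteratedDeriv l g (-1)|
            = |(l.factorial : ℝ)⁻¹ * (x - -1) ^ l| * |iteratedDeriv l g (-1)| := by rw [abs_mul]
          _ ≤ 1 * A := mul_le_mul h4 h3 (abs_nonneg _) zero_le_one
          _ = A := one_mul A
      calc ∑ l ∈ Finset.range (K + 1),
            |((l.factorial : ℝ)⁻¹ * (x - -1) ^ l) • iteratedDerivWithin l g (Icc (-1 : ℝ) x) (-1)|
          ≤ ∑ _l ∈ Finset.range (K + 1), A := Finset.sum_le_sum hbound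
        _ = (K + 1) * A := by rw [Finset.sum_const, Finset.card_range]; push_cast; ring
    -- bound the remainder
    have hxx' : 0 < x - x' := by linarith [hx'.2]
    have hiD : |iteratedDeriv (K + 1) g x'| * r ^ σ ≤ A := by
      have := hA (K + 1) le_rfl x'
      linarith [this, mul_comm (r ^ σ) (|iteratedDeriv (K + 1) g x'|)]
    have hrem : |iteratedDerivWithin (K + 1) g (Icc (-1 : ℝ) x) x' * (x - x') ^ K / (K.factorial : ℝ)
        * (x - -1)| ≤ A := by
      rw [itdW_eq hg hs (Ioo_subset_Icc_self hx') (K + 1)]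
      have hpow : (x - x') ^ K ≤ r ^ K := by
        apply pow_le_pow_left₀ hxx'.le
        rw [hr, abs_of_neg hx'0]; linarith
      have hkey : |iteratedDeriv (K + 1) g x'| * (x - x') ^ K ≤ A := by
        have hsplit : (r : ℝ) ^ K = r ^ σ * r ^ ((K : ℝ) - σ) := by
          rw [← Real.rpow_natCast r K, ← Real.rpow_add hr0]
          ring_nf
        have hle1 : r ^ ((K : ℝ) - σ) ≤ 1 :=
          Real.rpow_le_one hr0.le hr1 (by linarith)
        calc |iteratedDeriv (K + 1) g x'| * (x - x') ^ K
            ≤ |iteratedDeriv (K + 1) g x'| * r ^ K :=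
              mul_le_mul_of_nonneg_left hpow (abs_nonneg _)
          _ = (|iteratedDeriv (K + 1) g x'| * r ^ σ) * r ^ ((K : ℝ) - σ) := by
              rw [hsplit]; ring
          _ ≤ A * 1 := by
              apply mul_le_mul hiD hle1 (Real.rpow_nonneg hr0.le _)
              exact hA0
          _ = A := mul_one A
      have hx1' : |x - -1| ≤ 1 := by rw [abs_le]; constructor <;> linarith
      have hfac : (1 : ℝ) ≤ |(K.factorial : ℝ)| := by
        rw [abs_of_nonneg (by positivity)]
        exact_mod_cast Nat.one_le_iff_ne_zero.mpr K.factorial_ne_zero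
      rw [abs_mul, abs_div]
      have h0 : (0 : ℝ) ≤ |iteratedDeriv (K + 1) g x' * (x - x') ^ K| := abs_nonneg _
      have hd : |iteratedDeriv (K + 1) g x' * (x - x') ^ K| / |(K.factorial : ℝ)|
          ≤ |iteratedDeriv (K + 1) g x' * (x - x') ^ K| := div_le_self h0 hfac
      have habs : |iteratedDeriv (K + 1) g x' * (x - x') ^ K| ≤ A := by
        rw [abs_mul, abs_pow, abs_of_pos hxx']
        exact hkey
      calc |iteratedDeriv (K + 1) g x' * (x - x') ^ K| / |(K.factorial : ℝ)| * |x - -1|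
          ≤ |iteratedDeriv (K + 1) g x' * (x - x') ^ K| / |(K.factorial : ℝ)| * 1 := by
            apply mul_le_mul_of_nonneg_left hx1' (by positivity)
        _ = |iteratedDeriv (K + 1) g x' * (x - x') ^ K| / |(K.factorial : ℝ)| := mul_one _
        _ ≤ A := hd.trans habs
    have : |g x| ≤ |taylorWithinEval g K (Icc (-1 : ℝ) x) (-1) x| +
        |iteratedDerivWithin (K + 1) g (Icc (-1 : ℝ) x) x' * (x - x') ^ K / (K.factorial : ℝ) * (x - -1)| := by
      have : g x = taylorWithinEval g K (Icc (-1 : ℝ) x) (-1) x +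
          iteratedDerivWithin (K + 1) g (Icc (-1 : ℝ) x) x' * (x - x') ^ K / (K.factorial : ℝ) * (x - -1) := by
        linarith [heq]
      rw [this]
      exact abs_add_le _ _
    calc |g x| ≤ (K + 1) * A + A := by linarith
      _ = (K + 2) * A := by ring

lemma keyAll {g : ℝ → ℝ} (hg : ContDiff ℝ (⊤ : ℕ∞) g) {σ : ℝ} (hσ : 0 ≤ σ) {K : ℕ}
    (hK : σ ≤ K) {A : ℝ}
    (hA : ∀ l ≤ K + 1, ∀ t : ℝ, |t| ^ σ * |iteratedDeriv l g t| ≤ A)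
    {x : ℝ} (hx : |x| ≤ 1) : |g x| ≤ (K + 2) * A := by
  have hxx := abs_le.mp hx
  have hneg : ∀ y : ℝ, -1 ≤ y → y < 0 → |g y| ≤ (K + 2) * A := fun y h1 h2 =>
    keyNeg hg hσ hK hA h1 h2
  rcases lt_trichotomy x 0 with h | h | h
  · exact hneg x hxx.1 h
  · subst h
    have ht : Filter.Tendsto (fun y => |g y|) (nhdsWithin 0 (Set.Iio 0)) (nhds |g 0|) :=
      ((hg.continuous.abs).tendsto 0).mono_left nhdsWithin_le_nhds
    refine le_of_tendsto ht ?_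
    filter_upwards [Ioo_mem_nhdsLT_of_mem (by norm_num : (0 : ℝ) ∈ Set.Ioc (-1 : ℝ) 0)] with y hy
    exact hneg y hy.1.le hy.2
  · have hg' : ContDiff ℝ (⊤ : ℕ∞) (fun y => g (-y)) := hg.comp contDiff_neg
    have hA' : ∀ l ≤ K + 1, ∀ t : ℝ, |t| ^ σ * |iteratedDeriv l (fun y => g (-y)) t| ≤ A := by
      intro l hl t
      rw [iteratedDeriv_comp_neg]
      have h1 : |(-1 : ℝ) ^ l • iteratedDeriv l g (-t)| = |iteratedDeriv l g (-t)| := by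
        rw [smul_eq_mul, abs_mul, abs_pow, abs_neg, abs_one, one_pow, one_mul]
      rw [h1]
      have := hA l hl (-t)
      rwa [abs_neg] at this
    have := keyNeg hg' hσ hK hA' (x := -x) (by linarith) (by linarith)
    simpa using this

end Helpers

lemma schwartz_bddAbove (φ : SchwartzMap ℝ ℝ) {σ : ℝ} (hσ : 0 ≤ σ) (i j : ℕ) :
    BddAbove (Set.range fun x : ℝ => |x| ^ σ * |x ^ i * iteratedDeriv j (⇑φ) x|) := by
  obtain ⟨C1, hC1pos, hC1⟩ := φ.decay (⌈σ⌉₊ + i) j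
  obtain ⟨C2, hC2pos, hC2⟩ := φ.decay i j
  refine ⟨C1 + C2, ?_⟩
  rintro _ ⟨x, rfl⟩
  show |x| ^ σ * |x ^ i * iteratedDeriv j (⇑φ) x| ≤ C1 + C2
  have hnorm : ∀ k : ℕ, ‖x‖ ^ k * ‖iteratedFDeriv ℝ j (⇑φ) x‖
      = |x| ^ k * |iteratedDeriv j (⇑φ) x| := by
    intro k
    rw [norm_iteratedFDeriv_eq_norm_iteratedDeriv, Real.norm_eq_abs, Real.norm_eq_abs]
  have hg0 : (0 : ℝ) ≤ |iteratedDeriv j (⇑φ) x| := abs_nonneg _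
  have hD1 : |x| ^ (⌈σ⌉₊ + i) * |iteratedDeriv j (⇑φ) x| ≤ C1 := by
    rw [← hnorm]; exact hC1 x
  have hD2 : |x| ^ i * |iteratedDeriv j (⇑φ) x| ≤ C2 := by
    rw [← hnorm]; exact hC2 x
  rw [abs_mul, abs_pow]
  rcases le_or_gt (|x|) 1 with h | h
  · have h1 : |x| ^ σ ≤ 1 := Real.rpow_le_one (abs_nonneg x) h hσ
    have h2 : (0 : ℝ) ≤ |x| ^ i * |iteratedDeriv j (⇑φ) x| :=
      mul_nonneg (pow_nonneg (abs_nonneg x) i) hg0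
    calc |x| ^ σ * (|x| ^ i * |iteratedDeriv j (⇑φ) x|)
        ≤ 1 * (|x| ^ i * |iteratedDeriv j (⇑φ) x|) := mul_le_mul_of_nonneg_right h1 h2
      _ = |x| ^ i * |iteratedDeriv j (⇑φ) x| := one_mul _
      _ ≤ C2 := hD2
      _ ≤ C1 + C2 := by linarith
  · have h1 : |x| ^ σ ≤ |x| ^ (⌈σ⌉₊ : ℕ) := by
      rw [← Real.rpow_natCast |x| ⌈σ⌉₊]
      exact Real.rpow_le_rpow_of_exponent_le h.le (Nat.le_ceil σ)
    calc |x| ^ σ * (|x| ^ i * |iteratedDeriv j (⇑φ) x|)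
        ≤ |x| ^ (⌈σ⌉₊ : ℕ) * (|x| ^ i * |iteratedDeriv j (⇑φ) x|) := by
          apply mul_le_mul_of_nonneg_right h1
          exact mul_nonneg (pow_nonneg (abs_nonneg x) i) hg0
      _ = |x| ^ (⌈σ⌉₊ + i) * |iteratedDeriv j (⇑φ) x| := by rw [pow_add]; ring
      _ ≤ C1 := hD1
      _ ≤ C1 + C2 := by linarith

theorem weakly_perturbed_le_schwartz_nonneg (σ : ℝ) (hσ : 0 ≤ σ) (m msig : ℕ)
    (hmsig : (msig : ℝ) = m + 1 + (⌈σ⌉ : ℝ) * ((⌈σ⌉ : ℝ) + 1) / 2) :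
    ∃ C > 0, ∀ φ : SchwartzMap ℝ ℝ,
      SNorm m ⇑φ ≤ C * gNormNonneg σ msig (derivFam ⇑φ) := by
  set K : ℕ := ⌈σ⌉₊ with hKdef
  have hKσ : σ ≤ K := Nat.le_ceil σ
  have hmK : m + K + 1 ≤ msig := by
    have hc : ((⌈σ⌉ : ℤ) : ℝ) = (K : ℝ) := by
      rw [← Int.natCast_ceil_eq_ceil hσ]; push_cast; rfl
    have hreal : (m : ℝ) + K + 1 ≤ (msig : ℝ) := by
      rw [hmsig, hc]
      rcases Nat.eq_zero_or_pos K with h | h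
      · simp [h]
      · have h1 : (1 : ℝ) ≤ (K : ℝ) := by exact_mod_cast h
        nlinarith
    exact_mod_cast hreal
  refine ⟨((idx m).card + 1) * (K + 2), by positivity, fun φ => ?_⟩
  set B : ℝ := gNormNonneg σ msig (derivFam ⇑φ) with hBdef
  have hφs : ContDiff ℝ (⊤ : ℕ∞) (⇑φ) := φ.smooth ⊤
  have hBterm : ∀ i j : ℕ, i + j ≤ msig → ∀ x : ℝ,
      |x| ^ σ * |x ^ i * iteratedDeriv j (⇑φ) x| ≤ B := by
    intro i j hij x
    have h1 : |x| ^ σ * |x ^ i * iteratedDeriv j (⇑φ) x|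
        ≤ ⨆ y : ℝ, |y| ^ σ * |y ^ i * iteratedDeriv j (⇑φ) y| :=
      le_ciSup (schwartz_bddAbove φ hσ i j) x
    have hmem : (i, j) ∈ idx msig := by
      simp only [idx, Finset.mem_filter, Finset.mem_product, Finset.mem_range]
      refine ⟨⟨?_, ?_⟩, hij⟩ <;> omega
    have h2 : (⨆ y : ℝ, |y| ^ σ * |y ^ i * iteratedDeriv j (⇑φ) y|) ≤ B := by
      rw [hBdef]
      unfold gNormNonneg derivFam
      exact Finset.single_le_sum
        (f := fun p : ℕ × ℕ => ⨆ y : ℝ, |y| ^ σ * |y ^ p.1 * iteratedDeriv p.2 (⇑φ) y|)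
        (fun p _ => Real.iSup_nonneg fun y => by positivity) hmem
    linarith
  have hB0 : 0 ≤ B := by
    rw [hBdef]
    unfold gNormNonneg
    exact Finset.sum_nonneg fun p _ => Real.iSup_nonneg fun y => by positivity
  have hsup : ∀ p ∈ idx m,
      (⨆ x : ℝ, |x ^ p.1 * iteratedDeriv p.2 (⇑φ) x|) ≤ (K + 2) * B := by
    intro p hp
    have hpm : p.1 + p.2 ≤ m := by
      simp only [idx, Finset.mem_filter] at hp
      exact hp.2
    refine Real.iSup_le (fun x => ?_) (by positivity)
    rcases le_or_gt (|x|) 1 with h | h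
    · have hA : ∀ l ≤ K + 1, ∀ t : ℝ,
          |t| ^ σ * |iteratedDeriv l (iteratedDeriv p.2 (⇑φ)) t| ≤ B := by
        intro l hl t
        rw [itd_comp]
        have := hBterm 0 (p.2 + l) (by omega) t
        simpa using this
      have hkey := keyAll (itd_smooth hφs p.2) hσ hKσ hA h
      calc |x ^ p.1 * iteratedDeriv p.2 (⇑φ) x|
          = |x| ^ p.1 * |iteratedDeriv p.2 (⇑φ) x| := by rw [abs_mul, abs_pow]
        _ ≤ 1 * |iteratedDeriv p.2 (⇑φ) x| := by
            apply mul_le_mul_of_nonneg_right (pow_le_one₀ (abs_nonneg x) h) (abs_nonneg _)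
        _ = |iteratedDeriv p.2 (⇑φ) x| := one_mul _
        _ ≤ (K + 2) * B := hkey
    · have h1 : (1 : ℝ) ≤ |x| ^ σ := Real.one_le_rpow h.le hσ
      calc |x ^ p.1 * iteratedDeriv p.2 (⇑φ) x|
          ≤ |x| ^ σ * |x ^ p.1 * iteratedDeriv p.2 (⇑φ) x| :=
            le_mul_of_one_le_left (abs_nonneg _) h1
        _ ≤ B := hBterm p.1 p.2 (by omega) x
        _ ≤ (K + 2) * B := by nlinarith
  unfold SNorm
  calc ∑ p ∈ idx m, ⨆ x : ℝ, |x ^ p.1 * iteratedDeriv p.2 (⇑φ) x|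
      ≤ ∑ _p ∈ idx m, (K + 2) * B := Finset.sum_le_sum hsup
    _ = (idx m).card * ((K + 2) * B) := by rw [Finset.sum_const, nsmul_eq_mul]
    _ ≤ ((idx m).card + 1) * (K + 2) * B := by nlinarith
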